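/- arXiv:cs/0702040 — 2 statements merged into one kernel-verified Lean document; each statement's English description precedes it below -/
import Mathlib

section
/- If a relation S on B terminates, R-steps in A lift to single S-steps in B up to a terminating and confluent auxiliary relation T whose normal forms are preserved by the lifting, and S-steps commute appropriately with T-normalization, then R terminates. Concretely: suppose each R-step a → b satisfies f a ⇒_S c ⇒*_T f b where f b is the T-normal form of c; suppose moreover that if f b ⇒_S c' then already c ⇒_S c'' with c'' ⇒*_T c' for some c''; then nontermination of R yields an infinite (S ∪ T)-sequence, so if S ∪ T terminates then R terminates. -/
open Relation

private lemma wf_of_no_seq {B : Type*} (r : B → B → Prop)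
    (h : ¬ ∃ u : ℕ → B, ∀ n, r (u n) (u (n + 1))) :
    WellFounded (fun x y => r y x) := by
  constructor
  intro a
  by_contra ha
  have key : ∀ x, ¬ Acc (fun x y => r y x) x → ∃ y, ¬ Acc (fun x y => r y x) y ∧ r x y := by
    intro x hx
    obtain ⟨y, hy, hr⟩ := exists_not_acc_lt_of_not_acc hx
    exact ⟨y, hy, hr⟩
  choose g hg1 hg2 using key
  classical
  let u : ℕ → {x : B // ¬ Acc (fun x y => r y x) x} := fun n =>
    Nat.rec ⟨a, ha⟩ (fun _ p => ⟨g p.1 p.2, hg1 p.1 p.2⟩) n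
  exact h ⟨fun n => (u n).1, fun n => hg2 (u n).1 (u n).2⟩

/-- Termination transfer via lifting through a terminating confluent auxiliary
relation with commuting S-steps. -/
theorem stmt_1 {A B : Type*} (f : A → B) (R : A → A → Prop) (S T : B → B → Prop)
    (hTterm : ¬ ∃ u : ℕ → B, ∀ n, T (u n) (u (n + 1)))
    (hTconf : ∀ a b c, Relation.ReflTransGen T a b → Relation.ReflTransGen T a c →
      ∃ d, Relation.ReflTransGen T b d ∧ Relation.ReflTransGen T c d)
    (hlift : ∀ a b, R a b → ∃ c, S (f a) c ∧ Relation.ReflTransGen T c (f b) ∧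
      ∀ d, ¬ T (f b) d)
    (hcomm : ∀ a b c, R a b → S (f a) c → Relation.ReflTransGen T c (f b) →
      ∀ c', S (f b) c' → ∃ c'', S c c'' ∧ Relation.ReflTransGen T c'' c')
    (hST : ¬ ∃ u : ℕ → B, ∀ n, S (u n) (u (n + 1)) ∨ T (u n) (u (n + 1))) :
    ¬ ∃ u : ℕ → A, ∀ n, R (u n) (u (n + 1)) := by
  set ST : B → B → Prop := fun x y => S x y ∨ T x y with hSTdef
  have hwf : WellFounded (fun x y => ST y x) := wf_of_no_seq ST hST
  have hwfT : WellFounded (fun x y : B => TransGen ST y x) := by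
    have := hwf.transGen
    refine Subrelation.wf (r := fun x y => TransGen (fun x y => ST y x) x y) ?_ this
    intro x y h
    exact (Relation.transGen_swap.mpr h)
  have hstep : ∀ a b, R a b → TransGen ST (f a) (f b) := by
    intro a b hab
    obtain ⟨c, hc1, hc2, _⟩ := hlift a b hab
    refine TransGen.head' (Or.inl hc1) ?_
    exact ReflTransGen.mono (fun x y h => Or.inr h) _ _ hc2
  have hwfR : WellFounded (fun a b : A => R b a) := by
    refine Subrelation.wf (r := InvImage (fun x y => TransGen ST y x) f) ?_ (InvImage.wf f hwfT)
    intro a b h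
    exact hstep b a h
  rintro ⟨u, hu⟩
  have : ∀ a : A, ∀ n, u n = a → False := by
    intro a
    induction a using hwfR.induction with
    | _ a ih =>
      intro n hn
      exact ih (u (n+1)) (hn ▸ hu n) (n+1) rfl
  exact this (u 0) 0 rfl
end

section
/- Normal form factorization through a sub-relation: let T be a confluent, terminating relation on B which is the union of two sub-relations T₁ and T₂ such that every T₂-normal form can only be further reduced by T₁-steps. Then for every b with T-normal form g, there exists a T₂-normal form h with b ⇒*_{T₂} h ⇒*_{T₁} g. -/
/-- Normal-form factorization: in a confluent terminating relation `T = T₁ ∪ T₂`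
where `T₂`-normal forms only reduce by `T₁`-steps, every reduction to the
`T`-normal form factors through a `T₂`-normal form. -/
theorem stmt_7 {B : Type*} (T₁ T₂ : B → B → Prop)
    (T : B → B → Prop) (hT : ∀ x y, T x y ↔ T₁ x y ∨ T₂ x y)
    (hconf : ∀ a b c, Relation.ReflTransGen T a b → Relation.ReflTransGen T a c →
      ∃ d, Relation.ReflTransGen T b d ∧ Relation.ReflTransGen T c d)
    (hterm : ¬ ∃ u : ℕ → B, ∀ n, T (u n) (u (n + 1)))
    (hclosed : ∀ b, (∀ d, ¬ T₂ b d) → ∀ c, Relation.ReflTransGen T b c →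
      ∀ d, T c d → T₁ c d) :
    ∀ b g, Relation.ReflTransGen T b g → (∀ d, ¬ T g d) →
      ∃ h, Relation.ReflTransGen T₂ b h ∧ (∀ d, ¬ T₂ h d) ∧
        Relation.ReflTransGen T₁ h g := by
  intro b g hbg hgnf
  -- Step 1: obtain a T₂-normal form h of b
  have hex : ∃ h, Relation.ReflTransGen T₂ b h ∧ ∀ d, ¬ T₂ h d := by
    by_contra hno
    push_neg at hno
    -- every T₂-reachable point has a further T₂-step; build an infinite chain
    have step : ∀ x : {x // Relation.ReflTransGen T₂ b x},
        ∃ y : {x // Relation.ReflTransGen T₂ b x}, T₂ x.1 y.1 := by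
      rintro ⟨x, hx⟩
      obtain ⟨d, hd⟩ := hno x hx
      exact ⟨⟨d, hx.tail hd⟩, hd⟩
    choose f hf using step
    let u : ℕ → {x // Relation.ReflTransGen T₂ b x} := fun n =>
      Nat.rec ⟨b, Relation.ReflTransGen.refl⟩ (fun _ x => f x) n
    exact hterm ⟨fun n => (u n).1, fun n => (hT _ _).2 (Or.inr (hf (u n)))⟩
  obtain ⟨h, hbh, hhnf⟩ := hex
  refine ⟨h, hbh, hhnf, ?_⟩
  -- b →*_T h since T₂ ⊆ T
  have hbhT : Relation.ReflTransGen T b h :=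
    Relation.ReflTransGen.mono (fun x y hxy => (hT x y).2 (Or.inr hxy)) _ _ hbh
  -- confluence: g and h join at some d; g is normal so d = g, hence h →*_T g
  obtain ⟨d, hgd, hhd⟩ := hconf b g h hbg hbhT
  have hdg : d = g := by
    cases hgd.cases_head with
    | inl e => exact e.symm
    | inr e => exact absurd e.choose_spec.1 (hgnf _)
  subst hdg
  -- every T-step along h →* g is a T₁-step
  clear hbg hbhT hgnf hgd
  induction hhd with
  | refl => exact Relation.ReflTransGen.refl
  | tail hxc hstep ih =>
    exact ih.tail (hclosed h hhnf _ hxc _ hstep)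
end
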